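/- arXiv:1609.08304 — 3 statements merged into one kernel-verified Lean document; each statement's English description precedes it below -/
import Mathlib

section
/- Let H be a real Hilbert space, V = H × ℝ, and let C = {(x,α) ∈ V : ‖x‖ ≤ α} be the Lorentz cone, with partial order (x,α) ≤_C (y,β) iff (y−x, β−α) ∈ C; its interior is C° = {(x,α) : ‖x‖ < α}. Then the inversion map g(x,α) = (α² − ‖x‖²)⁻¹ · (−x, α) maps C° bijectively onto C°, satisfies g(g(v)) = v and g(λv) = λ⁻¹g(v) for all λ > 0 and v ∈ C°, and for all v,w ∈ C° one has v ≤_C w if and only if g(w) ≤_C g(v); that is, g is a bijective antihomogeneous order-antimorphism of C°. -/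
open Set Filter Topology
open RealInnerProductSpace

section Aux

variable {H : Type*} [NormedAddCommGroup H] [InnerProductSpace ℝ H]

private lemma lorentz_forward {x y : H} {a b : ℝ} (hx : ‖x‖ < a) (hy : ‖y‖ < b)
    (h : ‖y - x‖ ≤ b - a) :
    ‖(b ^ 2 - ‖y‖ ^ 2)⁻¹ • y - (a ^ 2 - ‖x‖ ^ 2)⁻¹ • x‖ ≤
      (a ^ 2 - ‖x‖ ^ 2)⁻¹ * a - (b ^ 2 - ‖y‖ ^ 2)⁻¹ * b := by
  have hx0 : (0:ℝ) ≤ ‖x‖ := norm_nonneg x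
  have hy0 : (0:ℝ) ≤ ‖y‖ := norm_nonneg y
  have hdv : 0 < a ^ 2 - ‖x‖ ^ 2 := by nlinarith
  have hdw : 0 < b ^ 2 - ‖y‖ ^ 2 := by nlinarith
  have ha : 0 < a := lt_of_le_of_lt hx0 hx
  have hb : 0 < b := lt_of_le_of_lt hy0 hy
  have hba : a ≤ b := by nlinarith [norm_nonneg (y - x)]
  have hsq : ‖y - x‖ ^ 2 ≤ (b - a) ^ 2 := by nlinarith [norm_nonneg (y - x)]
  have hip : ⟪x, y⟫ ≤ ‖x‖ * ‖y‖ := real_inner_le_norm x y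
  have hexp : ‖y - x‖ ^ 2 = ‖y‖ ^ 2 - 2 * ⟪x, y⟫ + ‖x‖ ^ 2 := by
    rw [@norm_sub_sq_real, real_inner_comm]
  have h1 : ‖y‖ ≤ ‖x‖ + (b - a) := by
    have h2 : ‖y‖ ≤ ‖x‖ + ‖y - x‖ := by
      have := norm_add_le x (y - x); simpa using this
    linarith
  have hD : 0 ≤ (a ^ 2 - ‖x‖ ^ 2) + (b ^ 2 - ‖y‖ ^ 2) - 2 * (a * b - ⟪x, y⟫) := by
    nlinarith
  have hkey : b * (a ^ 2 - ‖x‖ ^ 2) ≤ a * (b ^ 2 - ‖y‖ ^ 2) := by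
    nlinarith [mul_nonneg (sub_nonneg.2 hba) (sq_nonneg (a - ‖x‖)),
      mul_le_mul_of_nonneg_left (by nlinarith : ‖y‖ ^ 2 ≤ (‖x‖ + (b - a)) ^ 2) ha.le]
  have hsign : (b ^ 2 - ‖y‖ ^ 2)⁻¹ * b ≤ (a ^ 2 - ‖x‖ ^ 2)⁻¹ * a := by
    rw [inv_mul_eq_div, inv_mul_eq_div, div_le_div_iff₀ hdw hdv]
    linarith
  have hid : ((a ^ 2 - ‖x‖ ^ 2)⁻¹ * a - (b ^ 2 - ‖y‖ ^ 2)⁻¹ * b) ^ 2 -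
      (((b ^ 2 - ‖y‖ ^ 2)⁻¹ * ‖y‖) ^ 2
        - 2 * ((b ^ 2 - ‖y‖ ^ 2)⁻¹ * ((a ^ 2 - ‖x‖ ^ 2)⁻¹ * ⟪x, y⟫))
        + ((a ^ 2 - ‖x‖ ^ 2)⁻¹ * ‖x‖) ^ 2) =
      (a ^ 2 - ‖x‖ ^ 2)⁻¹ * (b ^ 2 - ‖y‖ ^ 2)⁻¹ *
        ((a ^ 2 - ‖x‖ ^ 2) + (b ^ 2 - ‖y‖ ^ 2) - 2 * (a * b - ⟪x, y⟫)) := by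
    field_simp
    ring
  have hexp2 : ‖(b ^ 2 - ‖y‖ ^ 2)⁻¹ • y - (a ^ 2 - ‖x‖ ^ 2)⁻¹ • x‖ ^ 2 =
      ((b ^ 2 - ‖y‖ ^ 2)⁻¹ * ‖y‖) ^ 2
        - 2 * ((b ^ 2 - ‖y‖ ^ 2)⁻¹ * ((a ^ 2 - ‖x‖ ^ 2)⁻¹ * ⟪x, y⟫))
        + ((a ^ 2 - ‖x‖ ^ 2)⁻¹ * ‖x‖) ^ 2 := by
    rw [@norm_sub_sq_real, real_inner_smul_left, real_inner_smul_right,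
      norm_smul, norm_smul, Real.norm_eq_abs, Real.norm_eq_abs,
      abs_of_pos (inv_pos.2 hdw), abs_of_pos (inv_pos.2 hdv), real_inner_comm]
  have hnn : 0 ≤ (a ^ 2 - ‖x‖ ^ 2)⁻¹ * (b ^ 2 - ‖y‖ ^ 2)⁻¹ *
      ((a ^ 2 - ‖x‖ ^ 2) + (b ^ 2 - ‖y‖ ^ 2) - 2 * (a * b - ⟪x, y⟫)) :=
    mul_nonneg (mul_nonneg (inv_nonneg.2 hdv.le) (inv_nonneg.2 hdw.le)) hD
  have hsq2 : ‖(b ^ 2 - ‖y‖ ^ 2)⁻¹ • y - (a ^ 2 - ‖x‖ ^ 2)⁻¹ • x‖ ^ 2 ≤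
      ((a ^ 2 - ‖x‖ ^ 2)⁻¹ * a - (b ^ 2 - ‖y‖ ^ 2)⁻¹ * b) ^ 2 := by
    rw [hexp2]; linarith
  have hfin := Real.sqrt_le_sqrt hsq2
  rwa [Real.sqrt_sq (norm_nonneg _), Real.sqrt_sq (sub_nonneg.2 hsign)] at hfin

end Aux

/-- The inversion map `g(x,α) = (α² − ‖x‖²)⁻¹ (−x, α)` on the interior of the
Lorentz cone `C = {(x,α) : ‖x‖ ≤ α}` of a real Hilbert space `H` is a bijective
antihomogeneous order-antimorphism of `C° = {(x,α) : ‖x‖ < α}` with `g ∘ g = id`. -/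
theorem lorentz_inversion
    {H : Type*} [NormedAddCommGroup H] [InnerProductSpace ℝ H] [CompleteSpace H] :
    let C : Set (H × ℝ) := {p | ‖p.1‖ ≤ p.2}
    let g : H × ℝ → H × ℝ := fun p => (p.2 ^ 2 - ‖p.1‖ ^ 2)⁻¹ • (-p.1, p.2)
    interior C = {p : H × ℝ | ‖p.1‖ < p.2} ∧
    Set.BijOn g (interior C) (interior C) ∧
    (∀ v ∈ interior C, g (g v) = v) ∧
    (∀ l : ℝ, 0 < l → ∀ v ∈ interior C, g (l • v) = l⁻¹ • g v) ∧
    (∀ v ∈ interior C, ∀ w ∈ interior C, (w - v ∈ C ↔ g v - g w ∈ C)) := by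
  intro C g
  -- interior description
  have hInt : interior C = {p : H × ℝ | ‖p.1‖ < p.2} := by
    apply Subset.antisymm
    · intro p hp
      rcases Metric.isOpen_iff.1 isOpen_interior p hp with ⟨ε, hε, hball⟩
      have hdist : dist ((p.1, p.2 - ε / 2) : H × ℝ) p < ε := by
        rw [Prod.dist_eq, max_lt_iff]
        refine ⟨by simpa using hε, ?_⟩
        rw [Real.dist_eq, show p.2 - ε / 2 - p.2 = -(ε / 2) by ring, abs_neg,
          abs_of_pos (half_pos hε)]
        linarith
      have hmem : (p.1, p.2 - ε / 2) ∈ C := interior_subset (hball hdist)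
      have : ‖p.1‖ ≤ p.2 - ε / 2 := hmem
      simp only [mem_setOf_eq]
      linarith
    · apply interior_maximal
      · intro p hp
        simp only [mem_setOf_eq] at hp ⊢
        exact le_of_lt hp
      · exact isOpen_lt (continuous_norm.comp continuous_fst) continuous_snd
  have hmemInt : ∀ p : H × ℝ, p ∈ interior C ↔ ‖p.1‖ < p.2 := by
    intro p; rw [hInt]; rfl
  -- positivity of the quadratic form on the interior
  have hd : ∀ v : H × ℝ, v ∈ interior C → 0 < v.2 ^ 2 - ‖v.1‖ ^ 2 := by
    intro v hv
    have h1 : ‖v.1‖ < v.2 := (hmemInt v).1 hv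
    nlinarith [norm_nonneg v.1]
  -- components of g
  have hg1 : ∀ v : H × ℝ, (g v).1 = (v.2 ^ 2 - ‖v.1‖ ^ 2)⁻¹ • (-v.1) := fun v => rfl
  have hg2 : ∀ v : H × ℝ, (g v).2 = (v.2 ^ 2 - ‖v.1‖ ^ 2)⁻¹ * v.2 := fun v => rfl
  -- g maps the interior to itself
  have hmaps : ∀ v ∈ interior C, g v ∈ interior C := by
    intro v hv
    have h1 : ‖v.1‖ < v.2 := (hmemInt v).1 hv
    have h2 := hd v hv
    rw [hmemInt, hg1, hg2, norm_smul, Real.norm_eq_abs, abs_of_pos (inv_pos.2 h2),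
      norm_neg]
    exact mul_lt_mul_of_pos_left h1 (inv_pos.2 h2)
  -- involution
  have hinv : ∀ v ∈ interior C, g (g v) = v := by
    intro v hv
    have h2 := hd v hv
    have hne : v.2 ^ 2 - ‖v.1‖ ^ 2 ≠ 0 := ne_of_gt h2
    have hq : (g v).2 ^ 2 - ‖(g v).1‖ ^ 2 = (v.2 ^ 2 - ‖v.1‖ ^ 2)⁻¹ := by
      rw [hg1, hg2, norm_smul, Real.norm_eq_abs, abs_of_pos (inv_pos.2 h2), norm_neg]
      field_simp
    have : g (g v) = ((g v).2 ^ 2 - ‖(g v).1‖ ^ 2)⁻¹ • (-(g v).1, (g v).2) := rfl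
    rw [this, hq, inv_inv, hg1, hg2]
    ext
    · show (v.2 ^ 2 - ‖v.1‖ ^ 2) • (-((v.2 ^ 2 - ‖v.1‖ ^ 2)⁻¹ • (-v.1))) = v.1
      rw [smul_neg, smul_smul, mul_inv_cancel₀ hne]
      simp
    · show (v.2 ^ 2 - ‖v.1‖ ^ 2) * ((v.2 ^ 2 - ‖v.1‖ ^ 2)⁻¹ * v.2) = v.2
      field_simp
  -- bijectivity
  have hbij : Set.BijOn g (interior C) (interior C) := by
    refine Set.InvOn.bijOn ⟨?_, ?_⟩ hmaps hmaps
    · intro v hv; exact hinv v hv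
    · intro v hv; exact hinv v hv
  -- antihomogeneity
  have hanti : ∀ l : ℝ, 0 < l → ∀ v ∈ interior C, g (l • v) = l⁻¹ • g v := by
    intro l hl v hv
    have hne : v.2 ^ 2 - ‖v.1‖ ^ 2 ≠ 0 := ne_of_gt (hd v hv)
    have hln : l ≠ 0 := ne_of_gt hl
    have h1 : (l • v).1 = l • v.1 := rfl
    have h2 : (l • v).2 = l * v.2 := rfl
    have hdq : (l • v).2 ^ 2 - ‖(l • v).1‖ ^ 2 = l ^ 2 * (v.2 ^ 2 - ‖v.1‖ ^ 2) := by
      rw [h1, h2, norm_smul, Real.norm_eq_abs, abs_of_pos hl]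
      ring
    show ((l • v).2 ^ 2 - ‖(l • v).1‖ ^ 2)⁻¹ • (-(l • v).1, (l • v).2) =
      l⁻¹ • ((v.2 ^ 2 - ‖v.1‖ ^ 2)⁻¹ • (-v.1, v.2))
    rw [hdq, h1, h2, smul_smul]
    ext
    · show (l ^ 2 * (v.2 ^ 2 - ‖v.1‖ ^ 2))⁻¹ • (-(l • v.1)) =
        (l⁻¹ * (v.2 ^ 2 - ‖v.1‖ ^ 2)⁻¹) • (-v.1)
      have hs : (l ^ 2 * (v.2 ^ 2 - ‖v.1‖ ^ 2))⁻¹ * l = l⁻¹ * (v.2 ^ 2 - ‖v.1‖ ^ 2)⁻¹ := by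
        field_simp
      rw [smul_neg, smul_neg, smul_smul, hs]
    · show (l ^ 2 * (v.2 ^ 2 - ‖v.1‖ ^ 2))⁻¹ * (l * v.2) =
        l⁻¹ * (v.2 ^ 2 - ‖v.1‖ ^ 2)⁻¹ * v.2
      field_simp
  -- forward implication of the order antimorphism property
  have hfwd : ∀ v ∈ interior C, ∀ w ∈ interior C, w - v ∈ C → g v - g w ∈ C := by
    intro v hv w hw hvw
    have h1 : ‖v.1‖ < v.2 := (hmemInt v).1 hv
    have h2 : ‖w.1‖ < w.2 := (hmemInt w).1 hw
    have hle : ‖w.1 - v.1‖ ≤ w.2 - v.2 := hvw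
    have key := lorentz_forward h1 h2 hle
    show ‖(g v - g w).1‖ ≤ (g v - g w).2
    have e1 : (g v - g w).1 =
        (w.2 ^ 2 - ‖w.1‖ ^ 2)⁻¹ • w.1 - (v.2 ^ 2 - ‖v.1‖ ^ 2)⁻¹ • v.1 := by
      rw [Prod.fst_sub, hg1, hg1, smul_neg, smul_neg]
      abel
    have e2 : (g v - g w).2 =
        (v.2 ^ 2 - ‖v.1‖ ^ 2)⁻¹ * v.2 - (w.2 ^ 2 - ‖w.1‖ ^ 2)⁻¹ * w.2 := by
      rw [Prod.snd_sub, hg2, hg2]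
    rw [e1, e2]
    exact key
  refine ⟨hInt, hbij, hinv, hanti, ?_⟩
  intro v hv w hw
  constructor
  · exact hfwd v hv w hw
  · intro h
    have := hfwd (g w) (hmaps w hw) (g v) (hmaps v hv) h
    rwa [hinv v hv, hinv w hw] at this
end

section
/- Let (V,C,u) be an order unit space. A map g : C° → C° is an antihomogeneous order-antimorphism if and only if M(x/y) = M(g(y)/g(x)) for all x, y ∈ C°. -/
open Set Filter Topology

variable {V : Type*} [NormedAddCommGroup V] [NormedSpace ℝ V]

/-- `(V, C, u)` is an order unit space whose norm is the order unit norm of `(C, u)`: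
`C` is an Archimedean cone and `u` is an order unit of it. -/
structure IsOrderUnitSpace (C : Set V) (u : V) : Prop where
  convex : Convex ℝ C
  smul_mem : ∀ l : ℝ, 0 ≤ l → ∀ x ∈ C, l • x ∈ C
  salient : C ∩ (-C) = {0}
  archimedean : ∀ x : V, ∀ y ∈ C, (∀ n : ℕ, 0 < n → y - (n : ℝ) • x ∈ C) → -x ∈ C
  unit_mem : u ∈ C
  order_unit : ∀ x : V, ∃ l : ℝ, 0 ≤ l ∧ l • u - x ∈ C
  norm_eq : ∀ x : V, ‖x‖ = sInf {l : ℝ | 0 < l ∧ x + l • u ∈ C ∧ l • u - x ∈ C}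

/-- `M(x/y) = inf {β > 0 : x ≤_C β y}`. -/
noncomputable def Mratio (C : Set V) (x y : V) : ℝ :=
  sInf {b : ℝ | 0 < b ∧ b • y - x ∈ C}

/-- The cone `C` is strictly convex: the open segment between any two linearly
independent boundary points lies in the interior. -/
def StrictlyConvexCone (C : Set V) : Prop :=
  ∀ x ∈ frontier C, ∀ y ∈ frontier C, LinearIndependent ℝ ![x, y] →
    openSegment ℝ x y ⊆ interior C

/-- `g` is antihomogeneous on the interior of `C`: `g (λ x) = λ⁻¹ g x`. -/
def IsAntihomogeneous (C : Set V) (g : V → V) : Prop :=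
  ∀ l : ℝ, 0 < l → ∀ x ∈ interior C, g (l • x) = l⁻¹ • g x

/-- `g` is an order-antimorphism of the interior of `C`: `x ≤_C y ↔ g y ≤_C g x`. -/
def IsOrderAntimorphism (C : Set V) (g : V → V) : Prop :=
  ∀ x ∈ interior C, ∀ y ∈ interior C, (y - x ∈ C ↔ g x - g y ∈ C)

/-- A state of `(V, C, u)`: a positive linear functional with `φ u = 1`. -/
def IsState (C : Set V) (u : V) (φ : V →ₗ[ℝ] ℝ) : Prop :=
  (∀ x ∈ C, 0 ≤ φ x) ∧ φ u = 1

namespace OUSaux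

variable {C : Set V} {u : V}

lemma zero_mem (h : IsOrderUnitSpace C u) : (0 : V) ∈ C := by
  simpa using h.smul_mem 0 le_rfl u h.unit_mem

lemma add_mem (h : IsOrderUnitSpace C u) {a b : V} (ha : a ∈ C) (hb : b ∈ C) :
    a + b ∈ C := by
  have h2 : (1/2 : ℝ) • a + (1/2 : ℝ) • b ∈ C :=
    h.convex ha hb (by norm_num) (by norm_num) (by norm_num)
  have h3 := h.smul_mem 2 (by norm_num) _ h2
  have : a + b = (2:ℝ) • ((1/2 : ℝ) • a + (1/2 : ℝ) • b) := by module
  rwa [← this] at h3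

lemma smul_mem_iff (h : IsOrderUnitSpace C u) {l : ℝ} (hl : 0 < l) {x : V} :
    l • x ∈ C ↔ x ∈ C := by
  constructor
  · intro hx
    have := h.smul_mem l⁻¹ (by positivity) _ hx
    rwa [smul_smul, inv_mul_cancel₀ hl.ne', one_smul] at this
  · exact h.smul_mem l hl.le x

lemma mem_of_norm_lt (h : IsOrderUnitSpace C u) {z : V} {l : ℝ} (hl : ‖z‖ < l) :
    z + l • u ∈ C ∧ l • u - z ∈ C := by
  set S := {m : ℝ | 0 < m ∧ z + m • u ∈ C ∧ m • u - z ∈ C} with hS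
  obtain ⟨l₁, hl₁, h1⟩ := h.order_unit z
  obtain ⟨l₂, hl₂, h2⟩ := h.order_unit (-z)
  have hne : S.Nonempty := by
    refine ⟨l₁ + l₂ + 1, by positivity, ?_, ?_⟩
    · have : z + (l₁ + l₂ + 1) • u = (l₂ • u - (-z)) + (l₁ + 1) • u := by module
      rw [this]
      exact add_mem h h2 (h.smul_mem _ (by positivity) _ h.unit_mem)
    · have : (l₁ + l₂ + 1) • u - z = (l₁ • u - z) + (l₂ + 1) • u := by module
      rw [this]
      exact add_mem h h1 (h.smul_mem _ (by positivity) _ h.unit_mem)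
  have hbdd : BddBelow S := ⟨0, fun m hm => hm.1.le⟩
  rw [h.norm_eq z] at hl
  obtain ⟨m, hmS, hml⟩ := exists_lt_of_csInf_lt hne hl
  constructor
  · have : z + l • u = (z + m • u) + (l - m) • u := by module
    rw [this]
    exact add_mem h hmS.2.1 (h.smul_mem _ (by linarith) _ h.unit_mem)
  · have : l • u - z = (m • u - z) + (l - m) • u := by module
    rw [this]
    exact add_mem h hmS.2.2 (h.smul_mem _ (by linarith) _ h.unit_mem)

lemma isClosed (h : IsOrderUnitSpace C u) : IsClosed C := by
  rw [← closure_eq_iff_isClosed]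
  refine Subset.antisymm (fun x hx => ?_) subset_closure
  have key : ∀ ε : ℝ, 0 < ε → x + ε • u ∈ C := by
    intro ε hε
    obtain ⟨c, hc, hdist⟩ := Metric.mem_closure_iff.1 hx ε hε
    have h1 : ‖x - c‖ < ε := by rwa [dist_eq_norm] at hdist
    have h2 := (mem_of_norm_lt h h1).1
    have : x + ε • u = ((x - c) + ε • u) + c := by module
    rw [this]; exact add_mem h h2 hc
  have := h.archimedean (-x) u h.unit_mem ?_
  · simpa using this
  · intro n hn
    have hn' : (0:ℝ) < n := by exact_mod_cast hn
    have := h.smul_mem n hn'.le _ (key ((n:ℝ)⁻¹) (by positivity))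
    have heq : (n:ℝ) • (x + (n:ℝ)⁻¹ • u) = u - (n:ℝ) • (-x) := by
      rw [smul_add, smul_smul, mul_inv_cancel₀ hn'.ne', one_smul]; module
    rwa [heq] at this

lemma exists_sub_smul_unit (h : IsOrderUnitSpace C u) {x : V} (hx : x ∈ interior C) :
    ∃ e : ℝ, 0 < e ∧ x - e • u ∈ C := by
  obtain ⟨r, hr, hball⟩ := Metric.isOpen_iff.1 isOpen_interior x hx
  have hu : (0:ℝ) < ‖u‖ + 1 := by positivity
  refine ⟨r / (2 * (‖u‖ + 1)), by positivity, ?_⟩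
  have : x - (r / (2 * (‖u‖ + 1))) • u ∈ Metric.ball x r := by
    rw [Metric.mem_ball, dist_eq_norm,
      show x - (r / (2 * (‖u‖ + 1))) • u - x = -((r / (2 * (‖u‖ + 1))) • u) by module,
      norm_neg, norm_smul, Real.norm_eq_abs, abs_of_pos (by positivity)]
    calc (r / (2 * (‖u‖ + 1))) * ‖u‖ ≤ (r / (2 * (‖u‖ + 1))) * (‖u‖ + 1) := by
          apply mul_le_mul_of_nonneg_left (by linarith) (by positivity)
      _ = r / 2 := by field_simp
      _ < r := by linarith
  exact interior_subset (hball this)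

lemma smul_interior (h : IsOrderUnitSpace C u) {l : ℝ} (hl : 0 < l) {x : V}
    (hx : x ∈ interior C) : l • x ∈ interior C := by
  obtain ⟨r, hr, hball⟩ := Metric.isOpen_iff.1 isOpen_interior x hx
  refine mem_interior.2 ⟨Metric.ball (l • x) (l * r), fun w hw => ?_, Metric.isOpen_ball,
    Metric.mem_ball_self (by positivity)⟩
  have : l⁻¹ • w ∈ Metric.ball x r := by
    rw [Metric.mem_ball, dist_eq_norm] at hw ⊢
    rw [show l⁻¹ • w - x = l⁻¹ • (w - l • x) from by
        rw [smul_sub, smul_smul, inv_mul_cancel₀ hl.ne', one_smul],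
      norm_smul, Real.norm_eq_abs, abs_of_pos (by positivity)]
    calc l⁻¹ * ‖w - l • x‖ < l⁻¹ * (l * r) := by
          exact mul_lt_mul_of_pos_left hw (by positivity)
      _ = r := by field_simp
  have hmem : l⁻¹ • w ∈ C := interior_subset (hball this)
  have := h.smul_mem l hl.le _ hmem
  rwa [smul_smul, mul_inv_cancel₀ hl.ne', one_smul] at this

lemma Mset_nonempty (h : IsOrderUnitSpace C u) (x : V) {y : V} (hy : y ∈ interior C) :
    {b : ℝ | 0 < b ∧ b • y - x ∈ C}.Nonempty := by
  obtain ⟨l, hl, h1⟩ := h.order_unit x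
  obtain ⟨e, he, h2⟩ := exists_sub_smul_unit h hy
  refine ⟨(l + 1) / e, by positivity, ?_⟩
  have hbe : (l + 1) / e * e = l + 1 := div_mul_cancel₀ _ he.ne'
  have key : ((l + 1) / e) • y - x
      = ((l + 1) / e) • (y - e • u) + ((l + 1) / e * e - l) • u + (l • u - x) := by module
  rw [key, hbe, show l + 1 - l = 1 by ring, one_smul]
  exact add_mem h (add_mem h (h.smul_mem _ (by positivity) _ h2) h.unit_mem) h1

lemma Mset_bddBelow (x y : V) : BddBelow {b : ℝ | 0 < b ∧ b • y - x ∈ C} :=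
  ⟨0, fun b hb => hb.1.le⟩

lemma Mratio_nonneg (x y : V) : 0 ≤ Mratio C x y :=
  Real.sInf_nonneg fun b hb => hb.1.le

lemma Mratio_smul_sub_mem (h : IsOrderUnitSpace C u) (x : V) {y : V} (hy : y ∈ interior C) :
    (Mratio C x y) • y - x ∈ C := by
  have hclos : Mratio C x y ∈ closure {b : ℝ | 0 < b ∧ b • y - x ∈ C} :=
    csInf_mem_closure (Mset_nonempty h x hy) (Mset_bddBelow x y)
  have hcont : Continuous fun b : ℝ => b • y - x := by continuity
  have := map_mem_closure hcont hclos (fun b hb => hb.2)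
  rwa [(isClosed h).closure_eq] at this

lemma Mratio_le_iff (h : IsOrderUnitSpace C u) (x : V) {y : V} (hy : y ∈ interior C)
    {β : ℝ} (hβ : 0 < β) : Mratio C x y ≤ β ↔ β • y - x ∈ C := by
  constructor
  · intro hle
    have key : β • y - x = (β - Mratio C x y) • y + ((Mratio C x y) • y - x) := by module
    rw [key]
    exact add_mem h (h.smul_mem _ (by linarith) _ (interior_subset hy))
      (Mratio_smul_sub_mem h x hy)
  · intro hmem
    exact csInf_le (Mset_bddBelow x y) ⟨hβ, hmem⟩

lemma Mratio_self_le_one (h : IsOrderUnitSpace C u) (x : V) : Mratio C x x ≤ 1 :=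
  csInf_le (Mset_bddBelow x x) ⟨one_pos, by simpa using zero_mem h⟩

lemma eq_of_le_iff {a b : ℝ} (ha : 0 ≤ a) (hb : 0 ≤ b)
    (hiff : ∀ β : ℝ, 0 < β → (a ≤ β ↔ b ≤ β)) : a = b := by
  refine le_antisymm (le_of_forall_pos_le_add fun ε hε => ?_)
    (le_of_forall_pos_le_add fun ε hε => ?_)
  · exact (hiff (b + ε) (by linarith)).2 (by linarith)
  · exact (hiff (a + ε) (by linarith)).1 (by linarith)

lemma Mratio_smul_num (h : IsOrderUnitSpace C u) {l : ℝ} (hl : 0 < l) (x : V) {y : V}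
    (hy : y ∈ interior C) : Mratio C (l • x) y = l * Mratio C x y := by
  refine eq_of_le_iff (Mratio_nonneg _ _) (mul_nonneg hl.le (Mratio_nonneg _ _)) fun β hβ => ?_
  rw [Mratio_le_iff h _ hy hβ]
  have h1 : β • y - l • x ∈ C ↔ (β / l) • y - x ∈ C := by
    rw [← smul_mem_iff h hl (x := (β / l) • y - x), smul_sub, smul_smul,
      mul_div_cancel₀ _ hl.ne']
  rw [h1, ← Mratio_le_iff h x hy (by positivity), le_div_iff₀ hl, mul_comm]

lemma Mratio_smul_den (h : IsOrderUnitSpace C u) {l : ℝ} (hl : 0 < l) (x : V) {y : V}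
    (hy : y ∈ interior C) : Mratio C x (l • y) = l⁻¹ * Mratio C x y := by
  refine eq_of_le_iff (Mratio_nonneg _ _) (mul_nonneg (by positivity) (Mratio_nonneg _ _)) fun β hβ => ?_
  rw [Mratio_le_iff h _ (smul_interior h hl hy) hβ]
  have h1 : β • (l • y) - x = (β * l) • y - x := by rw [smul_smul]
  rw [h1, ← Mratio_le_iff h x hy (by positivity), inv_mul_le_iff₀ hl, mul_comm]

lemma sub_mem_iff_Mratio_le_one (h : IsOrderUnitSpace C u) (x : V) {y : V}
    (hy : y ∈ interior C) : y - x ∈ C ↔ Mratio C x y ≤ 1 := by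
  rw [Mratio_le_iff h x hy one_pos, one_smul]

end OUSaux

/-- **Lemma 2.1** (first part). A map `g : C° → C°` is an antihomogeneous
order-antimorphism iff `M(x/y) = M(g y / g x)` for all `x, y ∈ C°`. -/


theorem antihomogeneous_orderAntimorphism_iff_Mratio
    (C : Set V) (u : V) (hous : IsOrderUnitSpace C u)
    (g : V → V) (hg : Set.MapsTo g (interior C) (interior C)) :
    (IsAntihomogeneous C g ∧ IsOrderAntimorphism C g) ↔
      ∀ x ∈ interior C, ∀ y ∈ interior C, Mratio C x y = Mratio C (g y) (g x) := by
  open OUSaux in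
  constructor
  · rintro ⟨hah, ham⟩ x hx y hy
    refine eq_of_le_iff (Mratio_nonneg _ _) (Mratio_nonneg _ _) fun β hβ => ?_
    rw [Mratio_le_iff hous x hy hβ, Mratio_le_iff hous (g y) (hg hx) hβ]
    have hby : β • y ∈ interior C := smul_interior hous hβ hy
    rw [ham x hx _ hby, hah β hβ y hy]
    constructor
    · intro hmem
      have := hous.smul_mem β hβ.le _ hmem
      rwa [smul_sub, smul_smul, mul_inv_cancel₀ hβ.ne', one_smul] at this
    · intro hmem
      have := hous.smul_mem β⁻¹ (by positivity) _ hmem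
      rwa [smul_sub, smul_smul, inv_mul_cancel₀ hβ.ne', one_smul] at this
  · intro H
    constructor
    · intro l hl x hx
      have hlx : l • x ∈ interior C := smul_interior hous hl hx
      set a := g (l • x) with ha
      set b := l⁻¹ • g x with hb
      have hga : a ∈ interior C := hg hlx
      have hgx : g x ∈ interior C := hg hx
      have hgb : b ∈ interior C := smul_interior hous (by positivity) hgx
      have hgx_eq : g x = l • b := by
        rw [hb, smul_smul, mul_inv_cancel₀ hl.ne', one_smul]
      -- first: Mratio C a b ≤ 1
      have e1 := H x hx (l • x) hlx
      rw [Mratio_smul_den hous hl x hx, hgx_eq, ← ha,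
        Mratio_smul_den hous hl a hgb] at e1
      have hab : Mratio C a b = Mratio C x x := by
        have := mul_left_cancel₀ (inv_ne_zero hl.ne') e1.symm
        exact this
      -- second: Mratio C b a ≤ 1
      have e2 := H (l • x) hlx x hx
      rw [Mratio_smul_num hous hl x hx, hgx_eq, ← ha,
        Mratio_smul_num hous hl b hga] at e2
      have hba : Mratio C b a = Mratio C x x := (mul_left_cancel₀ hl.ne' e2).symm
      have h1 : b - a ∈ C := by
        rw [sub_mem_iff_Mratio_le_one hous a hgb, hab]
        exact Mratio_self_le_one hous x
      have h2 : a - b ∈ C := by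
        rw [sub_mem_iff_Mratio_le_one hous b hga, hba]
        exact Mratio_self_le_one hous x
      have : a - b ∈ C ∩ (-C) := ⟨h2, by simpa using h1⟩
      rw [hous.salient] at this
      have : a - b = 0 := this
      rw [ha, hb] at *
      linear_combination (norm := module) this
    · intro x hx y hy
      rw [sub_mem_iff_Mratio_le_one hous x hy, H x hx y hy,
        ← sub_mem_iff_Mratio_le_one hous (g y) (hg hx)]
end

section
/- Let (V,C,u) be an order unit space with a strictly convex cone, and let g : C° → C° be a bijective antihomogeneous order-antimorphism. If x, y ∈ C° are linearly independent, then g(x) and g(y) are linearly independent and g maps C°(x,y) onto C°(g(x),g(y)). -/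
open Set Filter Topology

variable {V : Type*} [NormedAddCommGroup V] [NormedSpace ℝ V]

open Pointwise

namespace IsOrderUnitSpace

variable {C : Set V} {u : V} (h : IsOrderUnitSpace C u)

include h

lemma zero_mem : (0 : V) ∈ C := by
  have := h.salient
  have : (0:V) ∈ C ∩ (-C) := by rw [this]; rfl
  exact this.1

lemma add_mem {a b : V} (ha : a ∈ C) (hb : b ∈ C) : a + b ∈ C := by
  have := h.convex ha hb (by norm_num : (0:ℝ) ≤ (1/2:ℝ)) (by norm_num : (0:ℝ) ≤ (1/2:ℝ)) (by norm_num)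
  have h2 := h.smul_mem 2 (by norm_num) _ this
  have : (2:ℝ) • ((1/2 : ℝ) • a + (1/2 : ℝ) • b) = a + b := by
    rw [smul_add, smul_smul, smul_smul]; norm_num
  rwa [this] at h2

lemma eq_zero_of_mem_of_neg_mem {a : V} (ha : a ∈ C) (hb : -a ∈ C) : a = 0 := by
  have : a ∈ C ∩ (-C) := ⟨ha, by simpa using hb⟩
  rw [h.salient] at this; exact this

lemma smul_set_eq {l : ℝ} (hl : 0 < l) : l • C = C := by
  apply subset_antisymm
  · rintro _ ⟨c, hc, rfl⟩; exact h.smul_mem l hl.le c hc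
  · intro c hc
    exact ⟨l⁻¹ • c, h.smul_mem l⁻¹ (by positivity) c hc, by
      show l • l⁻¹ • c = c
      rw [smul_smul, mul_inv_cancel₀ hl.ne', one_smul]⟩

lemma smul_interior {l : ℝ} (hl : 0 < l) {a : V} (ha : a ∈ interior C) :
    l • a ∈ interior C := by
  have : l • interior C = interior C := by
    rw [← interior_smul₀ hl.ne' C, h.smul_set_eq hl]
  rw [← this]
  exact ⟨a, ha, rfl⟩

lemma smul_frontier {l : ℝ} (hl : 0 < l) {a : V} (ha : a ∈ frontier C) :
    l • a ∈ frontier C := by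
  have hmap : l • frontier C = frontier C := by
    have : (Homeomorph.smulOfNeZero (l) (hl.ne') : V ≃ₜ V) '' frontier C
        = frontier ((Homeomorph.smulOfNeZero (l) (hl.ne') : V ≃ₜ V) '' C) :=
      (Homeomorph.smulOfNeZero (l) (hl.ne')).image_frontier C
    simpa [h.smul_set_eq hl] using this
  rw [← hmap]; exact ⟨a, ha, rfl⟩

lemma add_interior {c a : V} (hc : c ∈ C) (ha : a ∈ interior C) : c + a ∈ interior C := by
  have hopen : IsOpen (c +ᵥ interior C) := (isOpen_interior).vadd c
  have hsub : (c +ᵥ interior C) ⊆ C := by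
    rintro _ ⟨z, hz, rfl⟩
    exact h.add_mem hc (interior_subset hz)
  exact interior_maximal hsub hopen ⟨a, ha, rfl⟩

lemma exists_mem_lt {z : V} {e : ℝ} (he : ‖z‖ < e) :
    ∃ l : ℝ, 0 < l ∧ l < e ∧ z + l • u ∈ C ∧ l • u - z ∈ C := by
  set S := {l : ℝ | 0 < l ∧ z + l • u ∈ C ∧ l • u - z ∈ C} with hS
  have hne : S.Nonempty := by
    obtain ⟨l1, hl1, hm1⟩ := h.order_unit z
    obtain ⟨l2, hl2, hm2⟩ := h.order_unit (-z)
    refine ⟨l1 + l2 + 1, ⟨by positivity, ?_, ?_⟩⟩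
    · have : z + (l1 + l2 + 1) • u = (l2 • u - -z) + (l1 + 1) • u := by
        module
      rw [this]
      exact h.add_mem hm2 (h.smul_mem _ (by positivity) u h.unit_mem)
    · have : (l1 + l2 + 1) • u - z = (l1 • u - z) + (l2 + 1) • u := by module
      rw [this]
      exact h.add_mem hm1 (h.smul_mem _ (by positivity) u h.unit_mem)
  have hbdd : BddBelow S := ⟨0, fun l hl => hl.1.le⟩
  have : sInf S < e := by rw [← h.norm_eq z] at *; exact he
  obtain ⟨l, hlS, hle⟩ := (csInf_lt_iff hbdd hne).mp this
  exact ⟨l, hlS.1, hle, hlS.2.1, hlS.2.2⟩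

lemma smul_unit_sub_mem {z : V} {e : ℝ} (he : ‖z‖ < e) : e • u - z ∈ C := by
  obtain ⟨l, hl0, hle, _, hm⟩ := h.exists_mem_lt he
  have : e • u - z = (l • u - z) + (e - l) • u := by module
  rw [this]
  exact h.add_mem hm (h.smul_mem _ (by linarith) u h.unit_mem)

lemma isClosed : IsClosed C := by
  rw [← closure_eq_iff_isClosed]
  apply subset_antisymm _ subset_closure
  intro z hz
  have key : ∀ e : ℝ, 0 < e → z + e • u ∈ C := by
    intro e he
    obtain ⟨c, hc, hlt⟩ := Metric.mem_closure_iff.mp hz e he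
    have : ‖c - z‖ < e := by rwa [dist_eq_norm, norm_sub_rev] at hlt
    have hm := h.smul_unit_sub_mem this
    have : z + e • u = c + (e • u - (c - z)) := by module
    rw [this]; exact h.add_mem hc hm
  have := h.archimedean (-z) u h.unit_mem (fun n hn => by
    have hpos : (0:ℝ) < (n:ℝ) := by exact_mod_cast hn
    have := key ((n:ℝ)⁻¹) (by positivity)
    have h2 := h.smul_mem (n:ℝ) hpos.le _ this
    have : (n:ℝ) • (z + (n:ℝ)⁻¹ • u) = u - (n:ℝ) • (-z) := by
      rw [smul_add, smul_smul, mul_inv_cancel₀ hpos.ne', one_smul]; module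
    rwa [this] at h2)
  simpa using this

end IsOrderUnitSpace
namespace IsOrderUnitSpace

variable {C : Set V} {u : V} (h : IsOrderUnitSpace C u)

/-- The defining set of `Mratio`. -/
def Mset (C : Set V) (p q : V) : Set ℝ := {b : ℝ | 0 < b ∧ b • q - p ∈ C}

lemma Mratio_eq (p q : V) : Mratio C p q = sInf (Mset C p q) := rfl

include h

lemma ne_zero_of_mem_interior (hV : ∃ w : V, w ≠ 0) {a : V} (ha : a ∈ interior C) :
    a ≠ 0 := by
  rintro rfl
  obtain ⟨w, hw⟩ := hV
  obtain ⟨r, hr, hball⟩ := Metric.mem_nhds_iff.mp (mem_interior_iff_mem_nhds.mp ha)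
  set v := (r / (2 * ‖w‖)) • w with hv
  have hvnorm : ‖v‖ < r := by
    have hwpos : 0 < ‖w‖ := norm_pos_iff.mpr hw
    rw [hv, norm_smul]
    rw [Real.norm_eq_abs, abs_of_pos (by positivity)]
    rw [div_mul_eq_mul_div, mul_comm]
    rw [mul_div_assoc]
    calc ‖w‖ * (r / (2 * ‖w‖)) = r / 2 := by field_simp
    _ < r := by linarith
  have h1 : v ∈ C := hball (by simpa [Metric.mem_ball, dist_eq_norm] using hvnorm)
  have h2 : -v ∈ C := hball (by simpa [Metric.mem_ball, dist_eq_norm] using hvnorm)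
  have := h.eq_zero_of_mem_of_neg_mem h1 h2
  rw [hv] at this
  have hwpos : 0 < ‖w‖ := norm_pos_iff.mpr hw
  have : w = 0 := by
    have hne : (r / (2 * ‖w‖)) ≠ 0 := by positivity
    exact (smul_eq_zero.mp this).resolve_left hne
  exact hw this

lemma exists_ball_subset {a : V} (ha : a ∈ interior C) :
    ∃ r : ℝ, 0 < r ∧ ∀ z : V, ‖z‖ < r → a + z ∈ C := by
  obtain ⟨r, hr, hball⟩ := Metric.mem_nhds_iff.mp (mem_interior_iff_mem_nhds.mp ha)
  exact ⟨r, hr, fun z hz => hball (by simpa [Metric.mem_ball, dist_eq_norm] using hz)⟩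

lemma Mset_nonempty {q : V} (hq : q ∈ interior C) (p : V) : (Mset C p q).Nonempty := by
  obtain ⟨r, hr, hball⟩ := h.exists_ball_subset hq
  rcases eq_or_ne p 0 with rfl | hp
  · exact ⟨1, one_pos, by simpa using interior_subset hq⟩
  · have hpn : 0 < ‖p‖ := norm_pos_iff.mpr hp
    set b := 2 * ‖p‖ / r with hb
    have hbpos : 0 < b := by positivity
    refine ⟨b, hbpos, ?_⟩
    have : q + -(b⁻¹ • p) ∈ C := by
      apply hball
      rw [norm_neg, norm_smul, Real.norm_eq_abs, abs_of_pos (by positivity)]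
      rw [hb]
      rw [show (2 * ‖p‖ / r)⁻¹ * ‖p‖ = r / 2 * (‖p‖ / ‖p‖) by field_simp]
      rw [div_self hpn.ne', mul_one]
      linarith
    have h2 := h.smul_mem b hbpos.le _ this
    have : b • (q + -(b⁻¹ • p)) = b • q - p := by
      rw [smul_add, smul_neg, smul_smul, mul_inv_cancel₀ hbpos.ne', one_smul]; module
    rwa [this] at h2

lemma Mset_lb {p q : V} (hp : p ∈ interior C) (hq : q ∈ C) (hqne : q ≠ 0) :
    ∃ e : ℝ, 0 < e ∧ ∀ b ∈ Mset C p q, e ≤ b := by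
  obtain ⟨r, hr, hball⟩ := h.exists_ball_subset hp
  have hqn : 0 < ‖q‖ := norm_pos_iff.mpr hqne
  set e := r / (2 * ‖q‖) with he
  have hepos : 0 < e := by positivity
  refine ⟨e, hepos, ?_⟩
  rintro b ⟨hb, hmem⟩
  by_contra hlt
  push_neg at hlt
  have h1 : p + -(e • q) ∈ C := by
    apply hball
    rw [norm_neg, norm_smul, Real.norm_eq_abs, abs_of_pos hepos, he]
    rw [show r / (2 * ‖q‖) * ‖q‖ = r / 2 * (‖q‖ / ‖q‖) by field_simp]
    rw [div_self hqn.ne', mul_one]; linarith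
  have h2 : (b - e) • q ∈ C := by
    have := h.add_mem hmem h1
    have heq : b • q - p + (p + -(e • q)) = (b - e) • q := by module
    rwa [heq] at this
  have h3 : -((b - e) • q) ∈ C := by
    have : (e - b) • q ∈ C := h.smul_mem _ (by linarith) q hq
    have heq : (e - b) • q = -((b - e) • q) := by module
    rwa [heq] at this
  have := h.eq_zero_of_mem_of_neg_mem h2 h3
  have : (b - e) = 0 ∨ q = 0 := smul_eq_zero.mp this
  rcases this with h' | h'
  · linarith [h']
  · exact hqne h'

lemma Mset_bddBelow (p q : V) : BddBelow (Mset C p q) := ⟨0, fun b hb => hb.1.le⟩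

lemma Mratio_pos (hV : ∃ w : V, w ≠ 0) {p q : V} (hp : p ∈ interior C) (hq : q ∈ interior C) :
    0 < Mratio C p q := by
  obtain ⟨e, he, hlb⟩ := h.Mset_lb hp (interior_subset hq) (h.ne_zero_of_mem_interior hV hq)
  calc (0:ℝ) < e := he
  _ ≤ sInf (Mset C p q) := le_csInf (h.Mset_nonempty hq p) hlb

end IsOrderUnitSpace
namespace IsOrderUnitSpace

variable {C : Set V} {u : V} (h : IsOrderUnitSpace C u)

include h

lemma Mset_upward {p q : V} (hq : q ∈ C) {b b' : ℝ} (hb : b ∈ Mset C p q) (hbb : b ≤ b') :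
    b' ∈ Mset C p q := by
  refine ⟨lt_of_lt_of_le hb.1 hbb, ?_⟩
  have := h.add_mem hb.2 (h.smul_mem (b' - b) (by linarith) q hq)
  have heq : b • q - p + (b' - b) • q = b' • q - p := by module
  rwa [heq] at this

lemma Mset_mem_of_gt {p q : V} (hq : q ∈ interior C) {t : ℝ} (ht : Mratio C p q < t) :
    t ∈ Mset C p q := by
  obtain ⟨b, hb, hbt⟩ := (csInf_lt_iff (h.Mset_bddBelow p q) (h.Mset_nonempty hq p)).mp ht
  exact h.Mset_upward (interior_subset hq) hb hbt.le

lemma Mratio_smul_sub_mem {p q : V} (hq : q ∈ interior C) :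
    Mratio C p q • q - p ∈ C := by
  have hcont : Continuous (fun b : ℝ => b • q - p) := by continuity
  have hclosed : IsClosed {b : ℝ | b • q - p ∈ C} := IsClosed.preimage hcont h.isClosed
  have hsub : Ioi (Mratio C p q) ⊆ {b : ℝ | b • q - p ∈ C} :=
    fun t ht => (h.Mset_mem_of_gt hq ht).2
  have : Mratio C p q ∈ closure (Ioi (Mratio C p q)) := by
    rw [closure_Ioi]; exact self_mem_Ici
  exact (hclosed.closure_subset_iff.mpr hsub) this

lemma Mratio_frontier (hV : ∃ w : V, w ≠ 0) {p q : V}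
    (hp : p ∈ interior C) (hq : q ∈ interior C) :
    Mratio C p q • q - p ∈ frontier C := by
  rw [h.isClosed.frontier_eq]
  refine ⟨h.Mratio_smul_sub_mem hq, ?_⟩
  intro hin
  obtain ⟨r, hr, hball⟩ := h.exists_ball_subset hin
  have hqne : q ≠ 0 := h.ne_zero_of_mem_interior hV hq
  have hqn : 0 < ‖q‖ := norm_pos_iff.mpr hqne
  have hM := h.Mratio_pos hV hp hq
  set d := min (r / (2 * ‖q‖)) (Mratio C p q / 2) with hd
  have hdpos : 0 < d := by positivity
  have hmem : (Mratio C p q - d) • q - p ∈ C := by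
    have : (Mratio C p q • q - p) + -(d • q) ∈ C := by
      apply hball
      rw [norm_neg, norm_smul, Real.norm_eq_abs, abs_of_pos hdpos]
      calc d * ‖q‖ ≤ r / (2 * ‖q‖) * ‖q‖ := by
            apply mul_le_mul_of_nonneg_right (min_le_left _ _) hqn.le
      _ = r / 2 * (‖q‖ / ‖q‖) := by field_simp
      _ < r := by rw [div_self hqn.ne', mul_one]; linarith
    have heq : (Mratio C p q • q - p) + -(d • q) = (Mratio C p q - d) • q - p := by module
    rwa [heq] at this
  have hdin : Mratio C p q - d ∈ Mset C p q := by
    refine ⟨?_, hmem⟩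
    have : d ≤ Mratio C p q / 2 := min_le_right _ _
    linarith
  have := csInf_le (h.Mset_bddBelow p q) hdin
  rw [Mratio_eq] at this
  linarith [this, hdpos]

lemma Mratio_g {g : V → V} (hbij : Set.BijOn g (interior C) (interior C))
    (hanti : IsAntihomogeneous C g) (hmor : IsOrderAntimorphism C g)
    {p q : V} (hp : p ∈ interior C) (hq : q ∈ interior C) :
    Mratio C p q = Mratio C (g q) (g p) := by
  have hset : Mset C p q = Mset C (g q) (g p) := by
    ext b
    constructor
    · rintro ⟨hb, hmem⟩
      refine ⟨hb, ?_⟩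
      have hbq : b • q ∈ interior C := h.smul_interior hb hq
      have h1 : g p - g (b • q) ∈ C := (hmor p hp (b • q) hbq).mp hmem
      rw [hanti b hb q hq] at h1
      have h2 := h.smul_mem b hb.le _ h1
      have heq : b • (g p - b⁻¹ • g q) = b • g p - g q := by
        rw [smul_sub, smul_smul, mul_inv_cancel₀ hb.ne', one_smul]
      rwa [heq] at h2
    · rintro ⟨hb, hmem⟩
      refine ⟨hb, ?_⟩
      have hbq : b • q ∈ interior C := h.smul_interior hb hq
      have h1 : g p - g (b • q) ∈ C := by
        rw [hanti b hb q hq]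
        have h2 := h.smul_mem b⁻¹ (by positivity) _ hmem
        have heq : b⁻¹ • (b • g p - g q) = g p - b⁻¹ • g q := by
          rw [smul_sub, smul_smul, inv_mul_cancel₀ hb.ne', one_smul]
        rwa [heq] at h2
      exact (hmor p hp (b • q) hbq).mpr h1
  rw [Mratio_eq, Mratio_eq, hset]

end IsOrderUnitSpace
namespace IsOrderUnitSpace

variable {C : Set V} {u : V} (h : IsOrderUnitSpace C u)

lemma indep_pair_iff {a b : V} :
    LinearIndependent ℝ ![a, b] ↔ b ≠ 0 ∧ ∀ c : ℝ, c • b ≠ a := by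
  rw [linearIndependent_fin2]
  simp only [Matrix.cons_val_zero, Matrix.cons_val_one, Matrix.head_cons]

lemma indep_comm {a b : V} (hab : LinearIndependent ℝ ![a, b]) :
    LinearIndependent ℝ ![b, a] := by
  rw [indep_pair_iff] at hab ⊢
  constructor
  · intro h0
    exact hab.2 0 (by rw [h0, zero_smul])
  · intro c hc
    rcases eq_or_ne c 0 with rfl | hcne
    · rw [zero_smul] at hc; exact hab.1 hc.symm
    · refine hab.2 c⁻¹ ?_
      rw [← hc, smul_smul, inv_mul_cancel₀ hcne, one_smul]

lemma not_smul_of_indep {a b : V} (hab : LinearIndependent ℝ ![a, b]) (c : ℝ) :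
    b ≠ c • a := by
  have := (indep_comm hab)
  rw [indep_pair_iff] at this
  exact fun hc => this.2 c hc.symm

lemma fst_ne_zero_of_indep {a b : V} (hab : LinearIndependent ℝ ![a, b]) : a ≠ 0 := by
  intro h0
  rw [indep_pair_iff] at hab
  exact hab.2 0 (by rw [h0, zero_smul])

lemma snd_ne_zero_of_indep {a b : V} (hab : LinearIndependent ℝ ![a, b]) : b ≠ 0 :=
  (indep_pair_iff.mp hab).1

lemma pair_indep_of_not_par {a b : V} (ha : a ≠ 0) (hb : b ≠ 0)
    (hab : ¬ ∃ c : ℝ, a = c • b) : LinearIndependent ℝ ![a, b] := by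
  rw [indep_pair_iff]
  refine ⟨hb, fun c hc => ?_⟩
  exact hab ⟨c, hc.symm⟩

lemma smul_indep {s t : ℝ} (hs : s ≠ 0) (ht : t ≠ 0) {a b : V}
    (hab : LinearIndependent ℝ ![a, b]) : LinearIndependent ℝ ![s • a, t • b] := by
  rw [indep_pair_iff] at hab ⊢
  refine ⟨smul_ne_zero ht hab.1, fun c hc => ?_⟩
  apply hab.2 (s⁻¹ * (c * t))
  apply smul_right_injective V hs
  show s • ((s⁻¹ * (c * t)) • b) = s • a
  rw [smul_smul, ← mul_assoc, mul_inv_cancel₀ hs, one_mul, ← smul_smul]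
  exact hc

lemma par_of_pair_dep {a b : V} (hb : b ≠ 0)
    (hdep : ¬ LinearIndependent ℝ ![a, b]) : ∃ c : ℝ, a = c • b := by
  rw [indep_pair_iff] at hdep
  push_neg at hdep
  obtain ⟨c, hc⟩ := hdep hb
  exact ⟨c, hc.symm⟩

include h

lemma pos_of_par {a b : V} (ha : a ∈ C) (hb : b ∈ C) (hane : a ≠ 0) {c : ℝ}
    (hc : a = c • b) : 0 < c := by
  rcases lt_trichotomy c 0 with hlt | rfl | hgt
  · exfalso
    have h1 : -a ∈ C := by
      have h2 : (-c) • b ∈ C := h.smul_mem (-c) (by linarith) b hb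
      rw [hc, ← neg_smul]
      exact h2
    exact hane (h.eq_zero_of_mem_of_neg_mem ha h1)
  · rw [zero_smul] at hc; exact absurd hc hane
  · exact hgt

lemma mem_of_frontier {a : V} (ha : a ∈ frontier C) : a ∈ C := by
  rw [h.isClosed.frontier_eq] at ha; exact ha.1

lemma not_interior_of_frontier {a : V} (ha : a ∈ frontier C) : a ∉ interior C := by
  rw [h.isClosed.frontier_eq] at ha; exact ha.2

lemma frontier_sum_interior (hsc : StrictlyConvexCone C) {a b : V}
    (ha : a ∈ frontier C) (hb : b ∈ frontier C) (hab : LinearIndependent ℝ ![a, b]) :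
    a + b ∈ interior C := by
  have hmid : (1/2 : ℝ) • a + (1/2 : ℝ) • b ∈ openSegment ℝ a b :=
    ⟨1/2, 1/2, by norm_num, by norm_num, by norm_num, rfl⟩
  have := hsc a ha b hb hab hmid
  have h2 := h.smul_interior (by norm_num : (0:ℝ) < 2) this
  have heq : (2:ℝ) • ((1/2 : ℝ) • a + (1/2 : ℝ) • b) = a + b := by module
  rwa [heq] at h2

lemma key_frontier (hsc : StrictlyConvexCone C) {s t : ℝ} {a b z : V}
    (hs : 0 < s) (ht : 0 < t) (hafr : a ∈ frontier C) (hbfr : b ∈ frontier C)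
    (hab : LinearIndependent ℝ ![a, b]) (hzfr : z ∈ frontier C)
    (heq : s • a + t • b = z) : False := by
  have h1 : s • a ∈ frontier C := h.smul_frontier hs hafr
  have h2 : t • b ∈ frontier C := h.smul_frontier ht hbfr
  have h3 : LinearIndependent ℝ ![s • a, t • b] := smul_indep hs.ne' ht.ne' hab
  have := h.frontier_sum_interior hsc h1 h2 h3
  rw [heq] at this
  exact h.not_interior_of_frontier hzfr this

/-- At most two boundary rays in a two-dimensional section. -/
lemma no_three_rays (hsc : StrictlyConvexCone C) {x y : V}
    (hxy : LinearIndependent ℝ ![x, y]) {c₁ c₂ c₃ : V}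
    (h₁ : c₁ ∈ frontier C) (h₂ : c₂ ∈ frontier C) (h₃ : c₃ ∈ frontier C)
    (hs₁ : c₁ ∈ (Submodule.span ℝ {x, y} : Submodule ℝ V))
    (hs₂ : c₂ ∈ (Submodule.span ℝ {x, y} : Submodule ℝ V))
    (hs₃ : c₃ ∈ (Submodule.span ℝ {x, y} : Submodule ℝ V))
    (h₁₂ : LinearIndependent ℝ ![c₁, c₂]) (h₁₃ : LinearIndependent ℝ ![c₁, c₃])
    (h₂₃ : LinearIndependent ℝ ![c₂, c₃]) : False := by
  classical
  have hne₃ : c₃ ≠ 0 := snd_ne_zero_of_indep h₁₃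
  have hfin : FiniteDimensional ℝ (Submodule.span ℝ ({x, y} : Set V)) :=
    FiniteDimensional.span_of_finite ℝ ((Set.finite_singleton y).insert x)
  have hle : Submodule.span ℝ ({c₁, c₂} : Set V) ≤ Submodule.span ℝ ({x, y} : Set V) := by
    rw [Submodule.span_le]
    rintro z hz
    rcases hz with rfl | hz
    · exact hs₁
    · rw [Set.mem_singleton_iff] at hz; subst hz; exact hs₂
  have hrank12 : Module.finrank ℝ (Submodule.span ℝ ({c₁, c₂} : Set V)) = 2 := by
    have := finrank_span_eq_card h₁₂
    rw [show Set.range ![c₁, c₂] = {c₁, c₂} by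
      simp [Matrix.range_cons, Matrix.range_empty, Set.pair_comm]] at this
    simpa using this
  have hrankxy : Module.finrank ℝ (Submodule.span ℝ ({x, y} : Set V)) ≤ 2 := by
    have := finrank_span_le_card (R := ℝ) ({x, y} : Set V)
    refine this.trans ?_
    rw [Set.toFinset_insert, Set.toFinset_singleton]
    exact Finset.card_insert_le _ _ |>.trans (by simp)
  have hspan_eq : Submodule.span ℝ ({c₁, c₂} : Set V) = Submodule.span ℝ ({x, y} : Set V) :=
    Submodule.eq_of_le_of_finrank_le hle (by rw [hrank12]; exact hrankxy)
  have hc₃mem : c₃ ∈ Submodule.span ℝ ({c₁, c₂} : Set V) := by rw [hspan_eq]; exact hs₃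
  obtain ⟨α, β, hαβ⟩ := Submodule.mem_span_pair.mp hc₃mem
  rcases lt_trichotomy α 0 with hα | hα | hα
  · rcases lt_trichotomy β 0 with hβ | hβ | hβ
    · have heq : -c₃ = (-α) • c₁ + (-β) • c₂ := by rw [← hαβ]; module
      have hmem : -c₃ ∈ C := by
        rw [heq]
        exact h.add_mem (h.smul_mem _ (by linarith) _ (h.mem_of_frontier h₁))
          (h.smul_mem _ (by linarith) _ (h.mem_of_frontier h₂))
      exact hne₃ (h.eq_zero_of_mem_of_neg_mem (h.mem_of_frontier h₃) hmem)
    · subst hβ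
      exact not_smul_of_indep h₁₃ α (by rw [← hαβ]; module)
    · exact h.key_frontier hsc one_pos (by linarith : (0:ℝ) < -α) h₃ h₁ (indep_comm h₁₃)
        (h.smul_frontier hβ h₂) (by rw [← hαβ]; module)
  · subst hα
    exact not_smul_of_indep h₂₃ β (by rw [← hαβ]; module)
  · rcases lt_trichotomy β 0 with hβ | hβ | hβ
    · exact h.key_frontier hsc one_pos (by linarith : (0:ℝ) < -β) h₃ h₂ (indep_comm h₂₃)
        (h.smul_frontier hα h₁) (by rw [← hαβ]; module)
    · subst hβ
      exact not_smul_of_indep h₁₃ α (by rw [← hαβ]; module)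
    · exact h.key_frontier hsc hα hβ h₁ h₂ h₁₂ h₃ hαβ

end IsOrderUnitSpace
namespace IsOrderUnitSpace

variable {C : Set V} {u : V} (h : IsOrderUnitSpace C u)

include h

/-- If the two boundary witnesses are parallel, the `M`-ratios multiply. -/
lemma Mratio_mul_of_parallel (hV : ∃ w : V, w ≠ 0) {p q r : V}
    (hp : p ∈ interior C) (hq : q ∈ interior C) (hr : r ∈ interior C) {lam : ℝ}
    (hlam : 0 < lam)
    (hpar : Mratio C q r • r - q = lam • (Mratio C p q • q - p)) :
    Mratio C p r = Mratio C p q * Mratio C q r := by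
  set M₁ := Mratio C p q with hM₁
  set M₂ := Mratio C q r with hM₂
  have hM₁pos : 0 < M₁ := h.Mratio_pos hV hp hq
  have hM₂pos : 0 < M₂ := h.Mratio_pos hV hq hr
  have hw₁fr : M₁ • q - p ∈ frontier C := h.Mratio_frontier hV hp hq
  have hkey : (M₁ * M₂) • r - p = (M₁ * lam + 1) • (M₁ • q - p) := by
    have : (M₁ * M₂) • r - p = M₁ • (M₂ • r - q) + (M₁ • q - p) := by module
    rw [this, hpar, smul_smul]
    module
  have hfr : (M₁ * M₂) • r - p ∈ frontier C := by
    rw [hkey]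
    exact h.smul_frontier (by positivity) hw₁fr
  have hle : Mratio C p r ≤ M₁ * M₂ :=
    csInf_le (h.Mset_bddBelow p r) ⟨by positivity, h.mem_of_frontier hfr⟩
  rcases eq_or_lt_of_le hle with heq | hlt
  · exact heq
  · exfalso
    set t := (Mratio C p r + M₁ * M₂) / 2 with ht
    have ht1 : Mratio C p r < t := by
      rw [ht]; linarith
    have ht2 : t < M₁ * M₂ := by rw [ht]; linarith
    have htmem : t • r - p ∈ C := (h.Mset_mem_of_gt hr ht1).2
    have : (M₁ * M₂) • r - p ∈ interior C := by
      have heq2 : (M₁ * M₂) • r - p = (t • r - p) + (M₁ * M₂ - t) • r := by module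
      rw [heq2]
      exact h.add_interior htmem (h.smul_interior (by linarith) hr)
    exact h.not_interior_of_frontier hfr this

/-- Strict convexity: equality in the multiplicative triangle inequality forces
the middle point into the plane of the outer two. -/
lemma span_of_E (hsc : StrictlyConvexCone C) (hV : ∃ w : V, w ≠ 0) {p q r : V}
    (hp : p ∈ interior C) (hq : q ∈ interior C) (hr : r ∈ interior C)
    (hpq : ∀ c : ℝ, p ≠ c • q) (hqr : ∀ c : ℝ, q ≠ c • r)
    (hE : Mratio C p r = Mratio C p q * Mratio C q r) :
    q ∈ (Submodule.span ℝ {p, r} : Submodule ℝ V) := by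
  set M₁ := Mratio C p q with hM₁
  set M₂ := Mratio C q r with hM₂
  have hM₁pos : 0 < M₁ := h.Mratio_pos hV hp hq
  have hM₂pos : 0 < M₂ := h.Mratio_pos hV hq hr
  set w₁ := M₁ • q - p with hw₁
  set w₂ := M₂ • r - q with hw₂
  have hw₁fr : w₁ ∈ frontier C := h.Mratio_frontier hV hp hq
  have hw₂fr : w₂ ∈ frontier C := h.Mratio_frontier hV hq hr
  have hw₁ne : w₁ ≠ 0 := by
    intro h0
    have : p = M₁ • q := by rw [hw₁, sub_eq_zero] at h0; exact h0.symm
    exact hpq M₁ this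
  have hw₂ne : w₂ ≠ 0 := by
    intro h0
    have : q = M₂ • r := by rw [hw₂, sub_eq_zero] at h0; exact h0.symm
    exact hqr M₂ this
  have hkey : M₁ • w₂ + (1:ℝ) • w₁ = Mratio C p r • r - p := by
    rw [hE, hw₁, hw₂]; module
  have hzfr : Mratio C p r • r - p ∈ frontier C := h.Mratio_frontier hV hp hr
  have hdep : ¬ LinearIndependent ℝ ![w₂, w₁] := by
    intro hindep
    exact h.key_frontier hsc hM₁pos one_pos hw₂fr hw₁fr hindep hzfr hkey
  obtain ⟨lam, hlam⟩ := par_of_pair_dep hw₁ne hdep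
  have hlampos : 0 < lam :=
    h.pos_of_par (h.Mratio_smul_sub_mem hr) (h.Mratio_smul_sub_mem hq) hw₂ne hlam
  -- (1 + lam * M₁) • q = lam • p + M₂ • r
  have hc : (1 + lam * M₁) • q = lam • p + M₂ • r := by
    have h2 : M₂ • r - q = lam • (M₁ • q - p) := hlam
    have h3 : M₂ • r - q - (lam • (M₁ • q - p)) = 0 := by rw [h2]; simp
    have : (1 + lam * M₁) • q - (lam • p + M₂ • r)
        = -(M₂ • r - q - (lam • (M₁ • q - p))) := by module
    rw [h3] at this
    simpa [sub_eq_zero] using this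
  have hcpos : (0:ℝ) < 1 + lam * M₁ := by positivity
  rw [Submodule.mem_span_pair]
  refine ⟨(1 + lam * M₁)⁻¹ * lam, (1 + lam * M₁)⁻¹ * M₂, ?_⟩
  have := congrArg (fun z => (1 + lam * M₁)⁻¹ • z) hc
  simp only [smul_smul, inv_mul_cancel₀ hcpos.ne', one_smul, smul_add] at this
  rw [← this]

/-- The two boundary witnesses of an independent pair are independent. -/
lemma w_indep (hV : ∃ w : V, w ≠ 0) {p q : V}
    (hp : p ∈ interior C) (hq : q ∈ interior C)
    (hpq : LinearIndependent ℝ ![p, q]) :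
    LinearIndependent ℝ ![Mratio C p q • q - p, Mratio C q p • p - q] := by
  set M₁ := Mratio C p q with hM₁
  set M₂ := Mratio C q p with hM₂
  have hM₁pos : 0 < M₁ := h.Mratio_pos hV hp hq
  have hM₂pos : 0 < M₂ := h.Mratio_pos hV hq hp
  have hw₁ne : M₁ • q - p ≠ 0 := by
    intro h0
    rw [sub_eq_zero] at h0
    exact not_smul_of_indep (indep_comm hpq) M₁ h0.symm
  have hw₂ne : M₂ • p - q ≠ 0 := by
    intro h0
    rw [sub_eq_zero] at h0
    exact not_smul_of_indep hpq M₂ h0.symm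
  by_contra hdep
  have : ¬ LinearIndependent ℝ ![M₂ • p - q, M₁ • q - p] := fun hi => hdep (indep_comm hi)
  obtain ⟨lam, hlam⟩ := par_of_pair_dep hw₁ne this
  have hlampos : 0 < lam :=
    h.pos_of_par (h.Mratio_smul_sub_mem hp) (h.Mratio_smul_sub_mem hq) hw₂ne hlam
  -- (M₂ + lam) • p = (1 + lam * M₁) • q
  have hc : (M₂ + lam) • p = (1 + lam * M₁) • q := by
    have h3 : M₂ • p - q - (lam • (M₁ • q - p)) = 0 := by rw [hlam]; simp
    have h4 : (M₂ + lam) • p - (1 + lam * M₁) • q = M₂ • p - q - (lam • (M₁ • q - p)) := by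
      module
    rw [h3] at h4
    rwa [sub_eq_zero] at h4
  have hcpos : (0:ℝ) < M₂ + lam := by positivity
  apply not_smul_of_indep (indep_comm hpq) ((M₂ + lam)⁻¹ * (1 + lam * M₁))
  have := congrArg (fun z => (M₂ + lam)⁻¹ • z) hc
  simp only [smul_smul, inv_mul_cancel₀ hcpos.ne', one_smul] at this
  exact this

/-- Each boundary witness within the plane lies on one of the two rays. -/
lemma w_ray (hsc : StrictlyConvexCone C) {x y : V} (hxy : LinearIndependent ℝ ![x, y])
    {a b w : V} (ha : a ∈ frontier C) (hb : b ∈ frontier C) (hw : w ∈ frontier C)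
    (hane : a ≠ 0) (haC : a ∈ C) (hwC : w ∈ C) (hwne : w ≠ 0) (hbne : b ≠ 0) (hbC : b ∈ C)
    (hsa : a ∈ (Submodule.span ℝ {x, y} : Submodule ℝ V))
    (hsb : b ∈ (Submodule.span ℝ {x, y} : Submodule ℝ V))
    (hsw : w ∈ (Submodule.span ℝ {x, y} : Submodule ℝ V))
    (hab : LinearIndependent ℝ ![a, b]) :
    (∃ lam : ℝ, 0 < lam ∧ w = lam • a) ∨ (∃ lam : ℝ, 0 < lam ∧ w = lam • b) := by
  by_cases h₁ : LinearIndependent ℝ ![a, w]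
  · by_cases h₂ : LinearIndependent ℝ ![b, w]
    · exact absurd (h.no_three_rays hsc hxy ha hb hw hsa hsb hsw hab h₁ h₂) (fun f => f)
    · right
      obtain ⟨lam, hlam⟩ := par_of_pair_dep hbne (fun hi => h₂ (indep_comm hi))
      exact ⟨lam, h.pos_of_par hwC hbC hwne hlam, hlam⟩
  · left
    obtain ⟨lam, hlam⟩ := par_of_pair_dep hane (fun hi => h₁ (indep_comm hi))
    exact ⟨lam, h.pos_of_par hwC haC hwne hlam, hlam⟩

end IsOrderUnitSpace
namespace IsOrderUnitSpace

variable {C : Set V} {u : V} (h : IsOrderUnitSpace C u)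

include h

lemma exists_middle (hsc : StrictlyConvexCone C) (hV : ∃ w : V, w ≠ 0) {x v y : V}
    (hx : x ∈ interior C) (hv : v ∈ interior C) (hy : y ∈ interior C)
    (hvs : v ∈ (Submodule.span ℝ {x, y} : Submodule ℝ V))
    (hxv : LinearIndependent ℝ ![x, v]) (hxy : LinearIndependent ℝ ![x, y])
    (hvy : LinearIndependent ℝ ![v, y]) :
    Mratio C x y = Mratio C x v * Mratio C v y ∨
    Mratio C v y = Mratio C v x * Mratio C x y ∨
    Mratio C x v = Mratio C x y * Mratio C y v := by
  have hxs : x ∈ (Submodule.span ℝ {x, y} : Submodule ℝ V) :=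
    Submodule.subset_span (Set.mem_insert x {y})
  have hys : y ∈ (Submodule.span ℝ {x, y} : Submodule ℝ V) :=
    Submodule.subset_span (Set.mem_insert_of_mem x rfl)
  set a := Mratio C x v • v - x with haw
  set b := Mratio C v x • x - v with hbw
  have hafr : a ∈ frontier C := h.Mratio_frontier hV hx hv
  have hbfr : b ∈ frontier C := h.Mratio_frontier hV hv hx
  have haC : a ∈ C := h.Mratio_smul_sub_mem hv
  have hbC : b ∈ C := h.Mratio_smul_sub_mem hx
  have hane : a ≠ 0 := by
    intro h0; rw [haw, sub_eq_zero] at h0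
    exact not_smul_of_indep (indep_comm hxv) (Mratio C x v) h0.symm
  have hbne : b ≠ 0 := by
    intro h0; rw [hbw, sub_eq_zero] at h0
    exact not_smul_of_indep hxv (Mratio C v x) h0.symm
  have hsa : a ∈ (Submodule.span ℝ {x, y} : Submodule ℝ V) :=
    Submodule.sub_mem _ (Submodule.smul_mem _ _ hvs) hxs
  have hsb : b ∈ (Submodule.span ℝ {x, y} : Submodule ℝ V) :=
    Submodule.sub_mem _ (Submodule.smul_mem _ _ hxs) hvs
  have hab : LinearIndependent ℝ ![a, b] := h.w_indep hV hx hv hxv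
  -- the witness of (v, y)
  set w₁ := Mratio C v y • y - v with hw₁
  have hw₁fr : w₁ ∈ frontier C := h.Mratio_frontier hV hv hy
  have hw₁C : w₁ ∈ C := h.Mratio_smul_sub_mem hy
  have hw₁ne : w₁ ≠ 0 := by
    intro h0; rw [hw₁, sub_eq_zero] at h0
    exact not_smul_of_indep (indep_comm hvy) (Mratio C v y) h0.symm
  have hsw₁ : w₁ ∈ (Submodule.span ℝ {x, y} : Submodule ℝ V) :=
    Submodule.sub_mem _ (Submodule.smul_mem _ _ hys) hvs
  rcases h.w_ray hsc hxy hafr hbfr hw₁fr hane haC hw₁C hw₁ne hbne hbC hsa hsb hsw₁ hab with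
    ⟨lam, hlampos, hlam⟩ | ⟨lam₁, hlam₁pos, hlam₁⟩
  · exact Or.inl (h.Mratio_mul_of_parallel hV hx hv hy hlampos hlam)
  · -- the witness of (x, y)
    set w₂ := Mratio C x y • y - x with hw₂
    have hw₂fr : w₂ ∈ frontier C := h.Mratio_frontier hV hx hy
    have hw₂C : w₂ ∈ C := h.Mratio_smul_sub_mem hy
    have hw₂ne : w₂ ≠ 0 := by
      intro h0; rw [hw₂, sub_eq_zero] at h0
      exact not_smul_of_indep (indep_comm hxy) (Mratio C x y) h0.symm
    have hsw₂ : w₂ ∈ (Submodule.span ℝ {x, y} : Submodule ℝ V) :=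
      Submodule.sub_mem _ (Submodule.smul_mem _ _ hys) hxs
    rcases h.w_ray hsc hxy hafr hbfr hw₂fr hane haC hw₂C hw₂ne hbne hbC hsa hsb hsw₂ hab with
      ⟨lam₂, hlam₂pos, hlam₂⟩ | ⟨lam₂, hlam₂pos, hlam₂⟩
    · -- w₂ ∥ a ; consider the witness of (y, v)
      set w₃ := Mratio C y v • v - y with hw₃
      have hw₃fr : w₃ ∈ frontier C := h.Mratio_frontier hV hy hv
      have hw₃C : w₃ ∈ C := h.Mratio_smul_sub_mem hv
      have hw₃ne : w₃ ≠ 0 := by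
        intro h0; rw [hw₃, sub_eq_zero] at h0
        exact not_smul_of_indep hvy (Mratio C y v) h0.symm
      have hsw₃ : w₃ ∈ (Submodule.span ℝ {x, y} : Submodule ℝ V) :=
        Submodule.sub_mem _ (Submodule.smul_mem _ _ hvs) hys
      rcases h.w_ray hsc hxy hafr hbfr hw₃fr hane haC hw₃C hw₃ne hbne hbC hsa hsb hsw₃ hab with
        ⟨lam₃, hlam₃pos, hlam₃⟩ | ⟨lam₃, hlam₃pos, hlam₃⟩
      · -- w₃ = lam₃ • a, w₂ = lam₂ • a : middle y
        refine Or.inr (Or.inr (h.Mratio_mul_of_parallel hV hx hy hv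
          (lam := lam₃ / lam₂) (by positivity) ?_))
        rw [← hw₃, ← hw₂, hlam₃, hlam₂, smul_smul, div_mul_cancel₀ _ hlam₂pos.ne']
      · -- w₃ ∥ b and w₁ ∥ b : contradiction with w_indep of (v, y)
        exfalso
        have hind := h.w_indep hV hv hy hvy
        apply not_smul_of_indep hind (lam₃ / lam₁)
        show w₃ = (lam₃ / lam₁) • w₁
        rw [hlam₃, hlam₁, smul_smul, div_mul_cancel₀ _ hlam₁pos.ne']
    · -- w₂ = lam₂ • b : middle x
      refine Or.inr (Or.inl (h.Mratio_mul_of_parallel hV hv hx hy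
        (lam := lam₂) hlam₂pos ?_))
      rw [← hw₂, ← hbw, hlam₂]

end IsOrderUnitSpace
namespace IsOrderUnitSpace

variable {C : Set V} {u : V} (h : IsOrderUnitSpace C u)

include h

lemma g_indep (hV : ∃ w : V, w ≠ 0) {g : V → V}
    (hbij : Set.BijOn g (interior C) (interior C)) (hanti : IsAntihomogeneous C g)
    {p q : V} (hp : p ∈ interior C) (hq : q ∈ interior C)
    (hpq : LinearIndependent ℝ ![p, q]) : LinearIndependent ℝ ![g p, g q] := by
  have hgp : g p ∈ interior C := hbij.mapsTo hp
  have hgq : g q ∈ interior C := hbij.mapsTo hq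
  have hgpne : g p ≠ 0 := h.ne_zero_of_mem_interior hV hgp
  have hgqne : g q ≠ 0 := h.ne_zero_of_mem_interior hV hgq
  by_contra hdep
  obtain ⟨c, hc⟩ := par_of_pair_dep hgqne hdep
  have hcpos : 0 < c :=
    h.pos_of_par (interior_subset hgp) (interior_subset hgq) hgpne hc
  have hinv : g (c⁻¹ • q) = c • g q := by
    rw [hanti c⁻¹ (by positivity) q hq, inv_inv]
  have : g p = g (c⁻¹ • q) := by rw [hinv, hc]
  have hpq' : p = c⁻¹ • q :=
    hbij.injOn hp (h.smul_interior (by positivity) hq) this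
  exact not_smul_of_indep (indep_comm hpq) c⁻¹ hpq'

/-- One half of the plane lemma: `g` maps the section into the image plane. -/
lemma maps_plane_half (hsc : StrictlyConvexCone C) {g : V → V}
    (hbij : Set.BijOn g (interior C) (interior C)) (hanti : IsAntihomogeneous C g)
    (hmor : IsOrderAntimorphism C g) {x y : V}
    (hx : x ∈ interior C) (hy : y ∈ interior C)
    (hind : LinearIndependent ℝ ![x, y]) :
    ∀ v, v ∈ (Submodule.span ℝ {x, y} : Submodule ℝ V) → v ∈ interior C →
      g v ∈ (Submodule.span ℝ {g x, g y} : Submodule ℝ V) := by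
  have hV : ∃ w : V, w ≠ 0 := ⟨x, fst_ne_zero_of_indep hind⟩
  have hgind : LinearIndependent ℝ ![g x, g y] := h.g_indep hV hbij hanti hx hy hind
  have hgxs : g x ∈ (Submodule.span ℝ {g x, g y} : Submodule ℝ V) :=
    Submodule.subset_span (Set.mem_insert _ _)
  have hgys : g y ∈ (Submodule.span ℝ {g x, g y} : Submodule ℝ V) :=
    Submodule.subset_span (Set.mem_insert_of_mem _ rfl)
  intro v hvs hv
  have hvne : v ≠ 0 := h.ne_zero_of_mem_interior hV hv
  by_cases hvx : LinearIndependent ℝ ![v, x]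
  swap
  · obtain ⟨c, hc⟩ := par_of_pair_dep (fst_ne_zero_of_indep hind) hvx
    have hcpos : 0 < c := h.pos_of_par (interior_subset hv) (interior_subset hx) hvne hc
    rw [hc, hanti c hcpos x hx]
    exact Submodule.smul_mem _ _ hgxs
  by_cases hvy : LinearIndependent ℝ ![v, y]
  swap
  · obtain ⟨c, hc⟩ := par_of_pair_dep (snd_ne_zero_of_indep hind) hvy
    have hcpos : 0 < c := h.pos_of_par (interior_subset hv) (interior_subset hy) hvne hc
    rw [hc, hanti c hcpos y hy]
    exact Submodule.smul_mem _ _ hgys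
  · have hxv : LinearIndependent ℝ ![x, v] := indep_comm hvx
    rcases h.exists_middle hsc hV hx hv hy hvs hxv hind hvy with hE | hE | hE
    · -- middle v : g v ∈ span {g y, g x}
      have hE' : Mratio C (g y) (g x) = Mratio C (g y) (g v) * Mratio C (g v) (g x) := by
        rw [← h.Mratio_g hbij hanti hmor hx hy, ← h.Mratio_g hbij hanti hmor hv hy,
          ← h.Mratio_g hbij hanti hmor hx hv, hE, mul_comm]
      have := h.span_of_E hsc hV (hbij.mapsTo hy) (hbij.mapsTo hv) (hbij.mapsTo hx)
        (fun c => not_smul_of_indep (h.g_indep hV hbij hanti hv hy hvy) c)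
        (fun c => not_smul_of_indep (h.g_indep hV hbij hanti hx hv hxv) c) hE'
      rwa [Set.pair_comm (g y) (g x)] at this
    · -- middle x : g x ∈ span {g y, g v}
      have hE' : Mratio C (g y) (g v) = Mratio C (g y) (g x) * Mratio C (g x) (g v) := by
        rw [← h.Mratio_g hbij hanti hmor hv hy, ← h.Mratio_g hbij hanti hmor hx hy,
          ← h.Mratio_g hbij hanti hmor hv hx, hE, mul_comm]
      have hmem := h.span_of_E hsc hV (hbij.mapsTo hy) (hbij.mapsTo hx) (hbij.mapsTo hv)
        (fun c => not_smul_of_indep hgind c)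
        (fun c => not_smul_of_indep (h.g_indep hV hbij hanti hv hx hvx) c) hE'
      obtain ⟨α, β, hαβ⟩ := Submodule.mem_span_pair.mp hmem
      have hβ : β ≠ 0 := by
        intro h0
        rw [h0, zero_smul, add_zero] at hαβ
        exact not_smul_of_indep (indep_comm hgind) α hαβ.symm
      have h4 : β • g v = g x - α • g y := by rw [← hαβ]; module
      have h5 := congrArg (fun z => β⁻¹ • z) h4
      simp only [smul_smul, inv_mul_cancel₀ hβ, one_smul] at h5
      rw [h5]
      exact Submodule.smul_mem _ _ (Submodule.sub_mem _ hgxs (Submodule.smul_mem _ _ hgys))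
    · -- middle y : g y ∈ span {g v, g x}
      have hE' : Mratio C (g v) (g x) = Mratio C (g v) (g y) * Mratio C (g y) (g x) := by
        rw [← h.Mratio_g hbij hanti hmor hx hv, ← h.Mratio_g hbij hanti hmor hy hv,
          ← h.Mratio_g hbij hanti hmor hx hy, hE, mul_comm]
      have hmem := h.span_of_E hsc hV (hbij.mapsTo hv) (hbij.mapsTo hy) (hbij.mapsTo hx)
        (fun c => not_smul_of_indep (h.g_indep hV hbij hanti hy hv (indep_comm hvy)) c)
        (fun c => not_smul_of_indep hgind c) hE'
      obtain ⟨α, β, hαβ⟩ := Submodule.mem_span_pair.mp hmem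
      have hα : α ≠ 0 := by
        intro h0
        rw [h0, zero_smul, zero_add] at hαβ
        exact not_smul_of_indep hgind β hαβ.symm
      have h4 : α • g v = g y - β • g x := by rw [← hαβ]; module
      have h5 := congrArg (fun z => α⁻¹ • z) h4
      simp only [smul_smul, inv_mul_cancel₀ hα, one_smul] at h5
      rw [h5]
      exact Submodule.smul_mem _ _ (Submodule.sub_mem _ hgys (Submodule.smul_mem _ _ hgxs))

end IsOrderUnitSpace

/-- **Lemma** (planes map to planes). A bijective antihomogeneous
order-antimorphism of a strictly convex cone maps `C°(x,y)` onto `C°(g x, g y)`,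
and `g x, g y` are linearly independent whenever `x, y` are. -/
theorem orderAntimorphism_maps_planes
    (C : Set V) (u : V) (hous : IsOrderUnitSpace C u) (hsc : StrictlyConvexCone C)
    (g : V → V) (hbij : Set.BijOn g (interior C) (interior C))
    (hanti : IsAntihomogeneous C g) (hmor : IsOrderAntimorphism C g)
    (x y : V) (hx : x ∈ interior C) (hy : y ∈ interior C)
    (hind : LinearIndependent ℝ ![x, y]) :
    LinearIndependent ℝ ![g x, g y] ∧
    g '' (((Submodule.span ℝ {x, y} : Submodule ℝ V) : Set V) ∩ interior C) =
      ((Submodule.span ℝ {g x, g y} : Submodule ℝ V) : Set V) ∩ interior C := by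
  have hV : ∃ w : V, w ≠ 0 := ⟨x, IsOrderUnitSpace.fst_ne_zero_of_indep hind⟩
  have hgind : LinearIndependent ℝ ![g x, g y] :=
    hous.g_indep hV hbij hanti hx hy hind
  refine ⟨hgind, ?_⟩
  have : Nonempty V := ⟨0⟩
  set f := Function.invFunOn g (interior C) with hf
  have hinv : Set.InvOn f g (interior C) (interior C) := hbij.invOn_invFunOn
  have hfmaps : Set.MapsTo f (interior C) (interior C) := by
    intro w hw
    obtain ⟨z, hz, rfl⟩ := hbij.surjOn hw
    rw [hinv.1 hz]; exact hz
  have hfbij : Set.BijOn f (interior C) (interior C) :=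
    hinv.symm.bijOn hfmaps hbij.mapsTo
  have hfanti : IsAntihomogeneous C f := by
    intro l hl z hz
    have h1 : f (l • z) ∈ interior C := hfmaps (hous.smul_interior hl hz)
    have h2 : l⁻¹ • f z ∈ interior C :=
      hous.smul_interior (by positivity) (hfmaps hz)
    apply hbij.injOn h1 h2
    rw [hinv.2 (hous.smul_interior hl hz)]
    rw [hanti l⁻¹ (by positivity) (f z) (hfmaps hz), inv_inv, hinv.2 hz]
  have hfmor : IsOrderAntimorphism C f := by
    intro zp hzp zq hzq
    have := hmor (f zq) (hfmaps hzq) (f zp) (hfmaps hzp)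
    rw [hinv.2 hzq, hinv.2 hzp] at this
    exact this.symm
  apply subset_antisymm
  · rintro _ ⟨v, ⟨hvs, hvi⟩, rfl⟩
    exact ⟨hous.maps_plane_half hsc hbij hanti hmor hx hy hind v hvs hvi,
      hbij.mapsTo hvi⟩
  · rintro w ⟨hws, hwi⟩
    have half := hous.maps_plane_half hsc hfbij hfanti hfmor
      (hbij.mapsTo hx) (hbij.mapsTo hy) hgind w hws hwi
    rw [hinv.1 hx, hinv.1 hy] at half
    exact ⟨f w, ⟨half, hfmaps hwi⟩, hinv.2 hwi⟩
end
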